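/- Let m ≥ 1 and let ψ(θ) = ln(Σ_{k=0}^m e^{C_k + θF_k}) with F_0,...,F_m not all equal. Set h = ψ'' and suppose the Hessian scalar curvature S(θ) := −h(θ)^{−1}(ln h)''(θ) is constant equal to λ ∈ ℝ. Then λ ∈ {2/k : k ∈ ℕ, 1 ≤ k ≤ m}. -/

import Mathlib

open Real Filter

lemma exp_indep (T : Finset ℝ) (b : ℝ → ℝ)
    (H : ∀ θ : ℝ, ∑ ν ∈ T, b ν * Real.exp (ν * θ) = 0) :
    ∀ ν ∈ T, b ν = 0 := by
  induction T using Finset.strongInduction with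
  | _ T ih =>
    rcases T.eq_empty_or_nonempty with rfl | hT
    · simp
    · set M := T.max' hT with hM
      have hMem := T.max'_mem hT
      have key : b M = 0 := by
        have h1 : ∀ θ : ℝ, ∑ ν ∈ T, b ν * Real.exp ((ν - M) * θ) = 0 := by
          intro θ
          have h0 := H θ
          have h2 : ∑ ν ∈ T, Real.exp (-(M*θ)) * (b ν * Real.exp (ν * θ)) = 0 := by
            rw [← Finset.mul_sum, h0]; ring
          rw [← h2]
          apply Finset.sum_congr rfl
          intro ν _
          rw [show (ν - M) * θ = ν*θ + -(M*θ) by ring, Real.exp_add]; ring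
        have h2 : Tendsto (fun θ : ℝ => ∑ ν ∈ T, b ν * Real.exp ((ν - M) * θ)) atTop
            (nhds (∑ ν ∈ T, if ν = M then b M else 0)) := by
          apply tendsto_finset_sum
          intro ν hν
          by_cases hc : ν = M
          · simp only [hc, if_true, sub_self, zero_mul, Real.exp_zero, mul_one]
            exact tendsto_const_nhds
          · simp only [hc, if_false]
            rw [show (0:ℝ) = b ν * 0 by ring]
            apply Tendsto.const_mul
            apply Real.tendsto_exp_atBot.comp
            have h3 : ν - M < 0 := by
              have h4 : ν < M := lt_of_le_of_ne (Finset.le_max' T ν hν) hc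
              linarith
            exact tendsto_id.const_mul_atTop_of_neg h3
        have h4 : Tendsto (fun θ : ℝ => ∑ ν ∈ T, b ν * Real.exp ((ν - M) * θ)) atTop
            (nhds 0) := by
          simp only [h1]; exact tendsto_const_nhds
        have h5 := tendsto_nhds_unique h2 h4
        rwa [Finset.sum_ite_eq' T M (fun _ => b M), if_pos hMem] at h5
      intro ν hν
      by_cases hc : ν = M
      · rwa [hc]
      · refine ih (T.erase M) (Finset.erase_ssubset hMem) ?_ ν (Finset.mem_erase.mpr ⟨hc, hν⟩)
        intro θ
        have := H θ
        rw [← Finset.add_sum_erase T _ hMem, key, zero_mul, zero_add] at this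
        exact this

lemma aux_growth_top (v hfun : ℝ → ℝ) (M2 : ℝ)
    (hvd : ∀ θ, HasDerivAt v (hfun θ) θ)
    (hbd : ∀ θ, v θ ≤ M2)
    (a s A : ℝ) (hA : 0 < A) (hs : 0 < s)
    (hlow : ∀ θ ∈ Set.Ici a, A * Real.exp (s * θ) ≤ hfun θ) : False := by
  set G : ℝ → ℝ := fun θ => v θ - (A / s) * Real.exp (s * θ) with hG
  have hGd : ∀ θ, HasDerivAt G (hfun θ - A * Real.exp (s * θ)) θ := by
    intro θ
    have hsne : s ≠ 0 := by intro hc; rw [hc] at hs; exact lt_irrefl 0 hs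
    have he : HasDerivAt (fun θ : ℝ => Real.exp (s * θ)) (Real.exp (s * θ) * s) θ := by
      simpa using ((hasDerivAt_id θ).const_mul s).exp
    have := (hvd θ).fun_sub (he.const_mul (A / s))
    convert! this using 1
    field_simp
  have hGdiff : Differentiable ℝ G := fun θ => (hGd θ).differentiableAt
  have hmono : MonotoneOn G (Set.Ici a) := by
    apply monotoneOn_of_deriv_nonneg (convex_Ici a) hGdiff.continuous.continuousOn
      (hGdiff.differentiableOn)
    intro θ hθ
    rw [(hGd θ).deriv]
    have := hlow θ (interior_subset hθ)
    linarith
  have t1 : Tendsto (fun θ : ℝ => G a + (A / s) * Real.exp (s * θ)) atTop atTop := by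
    apply tendsto_atTop_add_const_left
    exact (Real.tendsto_exp_atTop.comp (tendsto_id.const_mul_atTop hs)).const_mul_atTop
      (by positivity)
  obtain ⟨θ, h1, h2⟩ := ((t1.eventually_gt_atTop M2).and (eventually_ge_atTop a)).exists
  have h3 : G a ≤ G θ := hmono Set.self_mem_Ici h2 h2
  have h4 : v θ ≤ M2 := hbd θ
  simp only [hG] at h3
  linarith

lemma aux_growth_bot (v hfun : ℝ → ℝ) (M1 : ℝ)
    (hvd : ∀ θ, HasDerivAt v (hfun θ) θ)
    (hbd : ∀ θ, M1 ≤ v θ)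
    (a s A : ℝ) (hA : 0 < A) (hs : s < 0)
    (hlow : ∀ θ ∈ Set.Iic a, A * Real.exp (s * θ) ≤ hfun θ) : False := by
  set G : ℝ → ℝ := fun θ => v θ - (A / s) * Real.exp (s * θ) with hG
  have hGd : ∀ θ, HasDerivAt G (hfun θ - A * Real.exp (s * θ)) θ := by
    intro θ
    have hsne : s ≠ 0 := by intro hc; rw [hc] at hs; exact lt_irrefl 0 hs
    have he : HasDerivAt (fun θ : ℝ => Real.exp (s * θ)) (Real.exp (s * θ) * s) θ := by
      simpa using ((hasDerivAt_id θ).const_mul s).exp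
    have := (hvd θ).fun_sub (he.const_mul (A / s))
    convert! this using 1
    field_simp
  have hGdiff : Differentiable ℝ G := fun θ => (hGd θ).differentiableAt
  have hmono : MonotoneOn G (Set.Iic a) := by
    apply monotoneOn_of_deriv_nonneg (convex_Iic a) hGdiff.continuous.continuousOn
      (hGdiff.differentiableOn)
    intro θ hθ
    rw [(hGd θ).deriv]
    have := hlow θ (interior_subset hθ)
    linarith
  have t1 : Tendsto (fun θ : ℝ => G a + (A / s) * Real.exp (s * θ)) atBot atBot := by
    apply tendsto_atBot_add_const_left
    apply Filter.Tendsto.const_mul_atTop_of_neg (by exact div_neg_of_pos_of_neg hA hs)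
    exact Real.tendsto_exp_atTop.comp (tendsto_id.const_mul_atBot_of_neg hs)
  obtain ⟨θ, h1, h2⟩ := ((t1.eventually_lt_atBot M1).and (eventually_le_atBot a)).exists
  have h3 : G θ ≤ G a := hmono h2 Set.self_mem_Iic h2
  have h4 : M1 ≤ v θ := hbd θ
  simp only [hG] at h3
  linarith

lemma lam_pos (v hfun u1 : ℝ → ℝ) (lam M1 M2 : ℝ)
    (hvd : ∀ θ, HasDerivAt v (hfun θ) θ)
    (hpos : ∀ θ, 0 < hfun θ)
    (hlogd : ∀ θ, HasDerivAt (fun t => Real.log (hfun t)) (u1 θ) θ)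
    (hu1d : Differentiable ℝ u1)
    (hu1' : ∀ θ, deriv u1 θ = -lam * hfun θ)
    (hbd1 : ∀ θ, M1 ≤ v θ) (hbd2 : ∀ θ, v θ ≤ M2)
    (hl : lam ≤ 0) : False := by
  have hmul : ∀ c t : ℝ, HasDerivAt (fun x : ℝ => c * x) c t := by
    intro c t
    simpa using (hasDerivAt_id t).const_mul c
  have hmono_u1 : Monotone u1 :=
    monotone_of_deriv_nonneg hu1d (fun θ => by rw [hu1']; nlinarith [hpos θ])
  by_cases hA : ∃ a, 0 < u1 a
  · obtain ⟨a, ha⟩ := hA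
    set s := u1 a with hs
    have hLd : ∀ θ, HasDerivAt (fun θ => Real.log (hfun θ) - s * θ) (u1 θ - s) θ :=
      fun θ => (hlogd θ).sub (hmul s θ)
    have hLdiff : Differentiable ℝ (fun θ => Real.log (hfun θ) - s * θ) :=
      fun θ => (hLd θ).differentiableAt
    have hLmono : MonotoneOn (fun θ => Real.log (hfun θ) - s * θ) (Set.Ici a) := by
      apply monotoneOn_of_deriv_nonneg (convex_Ici a) hLdiff.continuous.continuousOn
        hLdiff.differentiableOn
      intro θ hθ
      rw [(hLd θ).deriv, sub_nonneg]
      exact hmono_u1 (le_of_lt (by simpa using hθ))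
    have hlow : ∀ θ ∈ Set.Ici a, (hfun a * Real.exp (-(s * a))) * Real.exp (s * θ) ≤ hfun θ := by
      intro θ hθ
      have h1 := hLmono Set.self_mem_Ici hθ hθ
      dsimp only at h1
      have h2 : Real.log (hfun a) - s * a + s * θ ≤ Real.log (hfun θ) := by linarith
      calc (hfun a * Real.exp (-(s * a))) * Real.exp (s * θ)
          = Real.exp (Real.log (hfun a) - s * a + s * θ) := by
            rw [Real.exp_add, Real.exp_sub, Real.exp_log (hpos a), Real.exp_neg]; ring
        _ ≤ Real.exp (Real.log (hfun θ)) := Real.exp_le_exp.mpr h2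
        _ = hfun θ := Real.exp_log (hpos θ)
    exact aux_growth_top v hfun M2 hvd hbd2 a s _
      (mul_pos (hpos a) (Real.exp_pos _)) ha hlow
  · push_neg at hA
    by_cases hs0 : u1 0 < 0
    · set s := u1 0 with hs
      have hLd : ∀ θ, HasDerivAt (fun θ => Real.log (hfun θ) - s * θ) (u1 θ - s) θ :=
        fun θ => (hlogd θ).sub (hmul s θ)
      have hLdiff : Differentiable ℝ (fun θ => Real.log (hfun θ) - s * θ) :=
        fun θ => (hLd θ).differentiableAt
      have hLanti : AntitoneOn (fun θ => Real.log (hfun θ) - s * θ) (Set.Iic 0) := by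
        apply antitoneOn_of_deriv_nonpos (convex_Iic 0) hLdiff.continuous.continuousOn
          hLdiff.differentiableOn
        intro θ hθ
        rw [(hLd θ).deriv, sub_nonpos]
        exact hmono_u1 (le_of_lt (by simpa using hθ))
      have hlow : ∀ θ ∈ Set.Iic 0, hfun 0 * Real.exp (s * θ) ≤ hfun θ := by
        intro θ hθ
        have h1 := hLanti hθ Set.self_mem_Iic hθ
        dsimp only at h1
        have h2 : Real.log (hfun 0) + s * θ ≤ Real.log (hfun θ) := by
          simp only [mul_zero] at h1; linarith
        calc hfun 0 * Real.exp (s * θ)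
            = Real.exp (Real.log (hfun 0) + s * θ) := by
              rw [Real.exp_add, Real.exp_log (hpos 0)]
          _ ≤ Real.exp (Real.log (hfun θ)) := Real.exp_le_exp.mpr h2
          _ = hfun θ := Real.exp_log (hpos θ)
      exact aux_growth_bot v hfun M1 hvd hbd1 0 s _ (hpos 0) hs0 hlow
    · have hz : u1 0 = 0 := le_antisymm (hA 0) (not_lt.mp hs0)
      have hlam0 : lam = 0 := by
        by_contra hne
        have hlt : lam < 0 := lt_of_le_of_ne hl hne
        have hsm : StrictMono u1 :=
          strictMono_of_deriv_pos (fun θ => by rw [hu1']; nlinarith [hpos θ])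
        have h1 := hsm (show (0:ℝ) < 1 by norm_num)
        have h2 := hA 1
        rw [hz] at h1
        linarith
      have hu1z : ∀ θ, u1 θ = 0 := by
        intro θ
        have := is_const_of_deriv_eq_zero hu1d
          (fun t => by rw [hu1' t, hlam0]; ring) θ 0
        rw [this, hz]
      have hconst : ∀ θ, hfun θ = hfun 0 := by
        intro θ
        have hld : Differentiable ℝ (fun t => Real.log (hfun t)) :=
          fun t => (hlogd t).differentiableAt
        have hc := is_const_of_deriv_eq_zero hld
          (fun t => by rw [(hlogd t).deriv, hu1z]) θ 0
        have h1 := Real.exp_log (hpos θ)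
        have h2 := Real.exp_log (hpos 0)
        rw [← h1, ← h2, hc]
      have hvlin : ∀ θ, v θ = v 0 + hfun 0 * θ := by
        intro θ
        have hd : ∀ t : ℝ, HasDerivAt (fun t => v t - hfun 0 * t) (hfun t - hfun 0) t :=
          fun t => (hvd t).sub (hmul (hfun 0) t)
        have hdiff : Differentiable ℝ (fun t => v t - hfun 0 * t) :=
          fun t => (hd t).differentiableAt
        have hc := is_const_of_deriv_eq_zero hdiff
          (fun t => by rw [(hd t).deriv, hconst t]; ring) θ 0
        simp only [mul_zero, sub_zero] at hc
        linarith [hc]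
      have hb := hbd2 ((M2 + 1 - v 0) / hfun 0)
      rw [hvlin ((M2 + 1 - v 0) / hfun 0)] at hb
      rw [mul_div_cancel₀ _ (hpos 0).ne'] at hb
      linarith

lemma middle (v hfun u1 : ℝ → ℝ) (lam : ℝ) (hlam : 0 < lam)
    (hvd : ∀ θ, HasDerivAt v (hfun θ) θ)
    (hpos : ∀ θ, 0 < hfun θ)
    (hfder : ∀ θ, HasDerivAt hfun (u1 θ * hfun θ) θ)
    (hu1d : Differentiable ℝ u1)
    (hu1' : ∀ θ, deriv u1 θ = -lam * hfun θ) :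
    ∃ g β K : ℝ, 0 < g ∧ 0 < K ∧
      ∀ θ, lam * (v θ - β) * (K * Real.exp (g * θ) + 1) = g * (K * Real.exp (g * θ) - 1) := by
  have hmul : ∀ c t : ℝ, HasDerivAt (fun x : ℝ => c * x) c t := by
    intro c t
    simpa using (hasDerivAt_id t).const_mul c
  set β : ℝ := (u1 0 + lam * v 0) / lam with hβ
  have hu1v : ∀ θ, u1 θ = lam * (β - v θ) := by
    have hqd : ∀ θ, HasDerivAt (fun θ => u1 θ + lam * v θ) 0 θ := by
      intro θ
      have h1 := ((hu1d θ).hasDerivAt).fun_add ((hvd θ).const_mul lam)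
      rw [hu1' θ] at h1
      convert! h1 using 1
      ring
    have hqdiff : Differentiable ℝ (fun θ => u1 θ + lam * v θ) :=
      fun θ => (hqd θ).differentiableAt
    intro θ
    have hc := is_const_of_deriv_eq_zero hqdiff (fun t => (hqd t).deriv) θ 0
    rw [hβ]; field_simp
    linarith
  set E : ℝ := u1 0 ^ 2 + 2 * lam * hfun 0 with hE
  have hEc : ∀ θ, u1 θ ^ 2 + 2 * lam * hfun θ = E := by
    have hqd : ∀ θ, HasDerivAt (fun θ => u1 θ ^ 2 + 2 * lam * hfun θ) 0 θ := by
      intro θ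
      have h1 := (((hu1d θ).hasDerivAt).pow 2).fun_add ((hfder θ).const_mul (2 * lam))
      rw [hu1' θ] at h1
      convert! h1 using 1
      ring
    have hqdiff : Differentiable ℝ (fun θ => u1 θ ^ 2 + 2 * lam * hfun θ) :=
      fun θ => (hqd θ).differentiableAt
    intro θ
    have hc := is_const_of_deriv_eq_zero hqdiff (fun t => (hqd t).deriv) θ 0
    rw [hc, hE]
  have hEpos : 0 < E := by
    have := hpos 0
    nlinarith [sq_nonneg (u1 0)]
  set g : ℝ := Real.sqrt E with hgdef
  have hg : 0 < g := Real.sqrt_pos.mpr hEpos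
  have hg2 : g ^ 2 = E := Real.sq_sqrt hEpos.le
  set p : ℝ → ℝ := fun θ => lam * (v θ - β) with hpdef
  have hpd : ∀ θ, HasDerivAt p (lam * hfun θ) θ := by
    intro θ
    exact ((hvd θ).sub_const β).const_mul lam
  have hsq : ∀ θ, p θ ^ 2 + 2 * lam * hfun θ = g ^ 2 := by
    intro θ
    have h1 : p θ = - u1 θ := by rw [hu1v θ]; show lam * (v θ - β) = _; ring
    rw [h1, hg2]
    linear_combination (hEc θ)
  have hP : ∀ θ, 0 < g + p θ := by
    intro θ
    have h1 := hsq θ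
    have h2 := hpos θ
    nlinarith [sq_nonneg (g - p θ), sq_nonneg (g + p θ)]
  have hQ : ∀ θ, 0 < g - p θ := by
    intro θ
    have h1 := hsq θ
    have h2 := hpos θ
    nlinarith [sq_nonneg (g - p θ), sq_nonneg (g + p θ)]
  set w : ℝ → ℝ := fun θ => (1/2) * (Real.log (g + p θ) - Real.log (g - p θ)) with hwdef
  have hwd : ∀ θ, HasDerivAt w (g / 2) θ := by
    intro θ
    have h1 : HasDerivAt (fun θ => Real.log (g + p θ)) (lam * hfun θ / (g + p θ)) θ :=
      (((hpd θ).const_add g)).log (hP θ).ne'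
    have h2 : HasDerivAt (fun θ => Real.log (g - p θ)) ((-(lam * hfun θ)) / (g - p θ)) θ :=
      (((hpd θ).neg.const_add g)).log (hQ θ).ne'
    have h3 := (h1.fun_sub h2).const_mul (1/2 : ℝ)
    convert! h3 using 1
    have hPQ : (g + p θ) * (g - p θ) = 2 * lam * hfun θ := by
      have := hsq θ
      nlinarith [this]
    have hPne := (hP θ).ne'
    have hQne := (hQ θ).ne'
    field_simp
    nlinarith [hPQ, hpos θ, hlam]
  set K : ℝ := Real.exp (2 * w 0) with hK
  have hKpos : 0 < K := Real.exp_pos _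
  refine ⟨g, β, K, hg, hKpos, ?_⟩
  intro θ
  have hwlin : w θ = g / 2 * θ + w 0 := by
    have hd : ∀ t : ℝ, HasDerivAt (fun t => w t - g / 2 * t) 0 t := by
      intro t
      have := (hwd t).fun_sub (hmul (g / 2) t)
      convert! this using 1
      ring
    have hdiff : Differentiable ℝ (fun t => w t - g / 2 * t) :=
      fun t => (hd t).differentiableAt
    have hc := is_const_of_deriv_eq_zero hdiff (fun t => (hd t).deriv) θ 0
    simp only [mul_zero, sub_zero] at hc
    linarith [hc]
  have hexp : (g + p θ) / (g - p θ) = K * Real.exp (g * θ) := by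
    have h1 : Real.exp (2 * w θ) = (g + p θ) / (g - p θ) := by
      rw [hwdef]
      dsimp only
      rw [show 2 * ((1/2) * (Real.log (g + p θ) - Real.log (g - p θ)))
          = Real.log (g + p θ) - Real.log (g - p θ) by ring]
      rw [Real.exp_sub, Real.exp_log (hP θ), Real.exp_log (hQ θ)]
    rw [← h1, hwlin]
    rw [show 2 * (g / 2 * θ + w 0) = g * θ + 2 * w 0 by ring]
    rw [Real.exp_add, hK]
    ring
  have h2 : g + p θ = (g - p θ) * (K * Real.exp (g * θ)) := by
    rw [← hexp]
    field_simp [(hQ θ).ne']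
  have hgoal : p θ * (K * Real.exp (g * θ) + 1) = g * (K * Real.exp (g * θ) - 1) := by
    linear_combination h2
  exact hgoal

lemma sum_sq_pos (m : ℕ) (F C : Fin (m+1) → ℝ) (hne : ∃ i j, F i ≠ F j) (θ : ℝ) :
    0 < ((∑ k, F k ^ 2 * Real.exp (C k + θ * F k)) * (∑ k, Real.exp (C k + θ * F k))
        - (∑ k, F k * Real.exp (C k + θ * F k)) ^ 2) := by
  set e : Fin (m+1) → ℝ := fun k => Real.exp (C k + θ * F k) with he
  have hepos : ∀ k, 0 < e k := fun k => Real.exp_pos _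
  have key : ∑ i, ∑ j, (F i - F j)^2 * (e i * e j)
      = 2 * ((∑ k, F k ^ 2 * e k) * (∑ k, e k) - (∑ k, F k * e k) ^ 2) := by
    have expand : ∀ i j : Fin (m+1), (F i - F j)^2 * (e i * e j)
        = (F i^2 * e i) * e j + e i * (F j^2 * e j) - 2 * ((F i * e i) * (F j * e j)) := by
      intro i j; ring
    calc ∑ i, ∑ j, (F i - F j)^2 * (e i * e j)
        = ∑ i, ∑ j, ((F i^2 * e i) * e j + e i * (F j^2 * e j)
            - 2 * ((F i * e i) * (F j * e j))) := by
          exact Finset.sum_congr rfl fun i _ => Finset.sum_congr rfl fun j _ => expand i j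
      _ = ∑ i, ((F i^2 * e i) * (∑ j, e j) + e i * (∑ j, F j^2 * e j)
            - 2 * ((F i * e i) * (∑ j, F j * e j))) := by
          apply Finset.sum_congr rfl
          intro i _
          rw [Finset.sum_sub_distrib, Finset.sum_add_distrib, ← Finset.mul_sum,
            ← Finset.mul_sum, ← Finset.mul_sum, ← Finset.mul_sum]
      _ = (∑ i, F i^2 * e i) * (∑ j, e j) + (∑ i, e i) * (∑ j, F j^2 * e j)
            - 2 * ((∑ i, F i * e i) * (∑ j, F j * e j)) := by
          rw [Finset.sum_sub_distrib, Finset.sum_add_distrib, ← Finset.sum_mul,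
            ← Finset.sum_mul]
          congr 1
          have hx : ∀ x : Fin (m+1), 2 * ((F x * e x) * (∑ j, F j * e j))
              = (F x * e x) * (2 * (∑ j, F j * e j)) := fun x => by ring
          simp only [hx]
          rw [← Finset.sum_mul]
          ring
      _ = 2 * ((∑ k, F k ^ 2 * e k) * (∑ k, e k) - (∑ k, F k * e k) ^ 2) := by ring
  obtain ⟨i0, j0, hij⟩ := hne
  have hpos : 0 < ∑ i, ∑ j, (F i - F j)^2 * (e i * e j) := by
    apply Finset.sum_pos'
    · intro i _
      apply Finset.sum_nonneg
      intro j _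
      positivity
    · refine ⟨i0, Finset.mem_univ _, ?_⟩
      apply Finset.sum_pos'
      · intro j _; positivity
      · refine ⟨j0, Finset.mem_univ _, ?_⟩
        have : F i0 - F j0 ≠ 0 := sub_ne_zero.mpr hij
        positivity
  linarith [key ▸ hpos]
lemma final_comb (m : ℕ) (F C : Fin (m + 1) → ℝ) (hne : ∃ i j, F i ≠ F j)
    (lam g β K : ℝ) (hlam : 0 < lam) (hg : 0 < g) (hK : 0 < K)
    (hid : ∀ θ, ∑ k, Real.exp (C k) * ((lam * (F k - β) + g) * Real.exp (F k * θ)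
        + K * (lam * (F k - β) - g) * Real.exp ((F k + g) * θ)) = 0) :
    ∃ k : ℕ, 1 ≤ k ∧ k ≤ m ∧ lam = 2 / k := by
  classical
  set S : Finset ℝ := Finset.image F Finset.univ with hS
  set A : ℝ → ℝ := fun ν => ∑ k ∈ Finset.univ.filter (fun k => F k = ν), Real.exp (C k)
    with hA
  have hA0 : ∀ ν, ν ∉ S → A ν = 0 := by
    intro ν hν
    rw [hA]
    apply Finset.sum_eq_zero
    intro k hk
    exfalso
    apply hν
    rw [hS]
    exact Finset.mem_image.mpr ⟨k, Finset.mem_univ _, (Finset.mem_filter.mp hk).2⟩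
  have hApos : ∀ ν ∈ S, 0 < A ν := by
    intro ν hν
    obtain ⟨k, _, hk⟩ := Finset.mem_image.mp hν
    apply Finset.sum_pos (fun i _ => Real.exp_pos _)
    exact ⟨k, Finset.mem_filter.mpr ⟨Finset.mem_univ _, hk⟩⟩
  -- fiber sum lemma
  have hfiber : ∀ φ : ℝ → ℝ, ∑ ν ∈ S, φ ν * A ν = ∑ k, φ (F k) * Real.exp (C k) := by
    intro φ
    rw [hS]
    apply Finset.sum_image' (fun k => φ (F k) * Real.exp (C k))
    intro i _
    rw [Finset.mul_sum]
    apply Finset.sum_congr rfl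
    intro j hj
    rw [(Finset.mem_filter.mp hj).2]
  set T : Finset ℝ := S ∪ S.image (· + g) with hT
  set D : ℝ → ℝ := fun ν => (lam * (ν - β) + g) * A ν + K * (lam * (ν - g - β) - g) * A (ν - g)
    with hD
  have hsum : ∀ θ, ∑ ν ∈ T, D ν * Real.exp (ν * θ) = 0 := by
    intro θ
    have split : ∑ ν ∈ T, D ν * Real.exp (ν * θ)
        = (∑ ν ∈ T, ((lam * (ν - β) + g) * Real.exp (ν * θ)) * A ν)
          + ∑ ν ∈ T, ((K * (lam * (ν - g - β) - g) * Real.exp (ν * θ)) * A (ν - g)) := by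
      rw [← Finset.sum_add_distrib]
      apply Finset.sum_congr rfl
      intro ν _
      rw [hD]
      ring
    have part1 : ∑ ν ∈ T, ((lam * (ν - β) + g) * Real.exp (ν * θ)) * A ν
        = ∑ k, ((lam * (F k - β) + g) * Real.exp (F k * θ)) * Real.exp (C k) := by
      rw [← hfiber (fun ν => (lam * (ν - β) + g) * Real.exp (ν * θ))]
      symm
      apply Finset.sum_subset Finset.subset_union_left
      intro ν _ hν
      rw [hA0 ν hν, mul_zero]
    have part2 : ∑ ν ∈ T, ((K * (lam * (ν - g - β) - g) * Real.exp (ν * θ)) * A (ν - g))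
        = ∑ k, ((K * (lam * (F k - β) - g) * Real.exp ((F k + g) * θ)) * Real.exp (C k)) := by
      have e1 : ∑ ν ∈ S.image (· + g), ((K * (lam * (ν - g - β) - g) * Real.exp (ν * θ)) * A (ν - g))
          = ∑ μ ∈ S, ((K * (lam * (μ - β) - g) * Real.exp ((μ + g) * θ)) * A μ) := by
        rw [Finset.sum_image (by intro a _ b _ h; linarith [h] : ∀ x ∈ S, ∀ y ∈ S, x + g = y + g → x = y)]
        apply Finset.sum_congr rfl
        intro μ _
        ring_nf
      rw [← hfiber (fun μ => K * (lam * (μ - β) - g) * Real.exp ((μ + g) * θ)), ← e1]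
      symm
      apply Finset.sum_subset Finset.subset_union_right
      intro ν _ hν
      have : ν - g ∉ S := by
        intro hc
        apply hν
        apply Finset.mem_image.mpr ⟨ν - g, hc, by ring⟩
      rw [hA0 _ this, mul_zero]
    rw [split, part1, part2, ← Finset.sum_add_distrib]
    rw [← hid θ]
    apply Finset.sum_congr rfl
    intro k _
    ring
  have hDzero : ∀ ν, D ν = 0 := by
    intro ν
    by_cases hν : ν ∈ T
    · exact exp_indep T D hsum ν hν
    · have h1 : ν ∉ S := fun hc => hν (Finset.mem_union_left _ hc)
      have h2 : ν - g ∉ S := by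
        intro hc
        exact hν (Finset.mem_union_right _ (Finset.mem_image.mpr ⟨ν - g, hc, by ring⟩))
      rw [hD]
      dsimp only
      rw [hA0 _ h1, hA0 _ h2]
      ring
  -- extremes
  have hSne : S.Nonempty := ⟨F 0, Finset.mem_image.mpr ⟨0, Finset.mem_univ _, rfl⟩⟩
  set fr : ℝ := S.max' hSne with hfr
  set f1 : ℝ := S.min' hSne with hf1
  have hfrS : fr ∈ S := S.max'_mem hSne
  have hf1S : f1 ∈ S := S.min'_mem hSne
  have hf1fr : f1 < fr := by
    obtain ⟨i, j, hij⟩ := hne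
    have hiS : F i ∈ S := Finset.mem_image.mpr ⟨i, Finset.mem_univ _, rfl⟩
    have hjS : F j ∈ S := Finset.mem_image.mpr ⟨j, Finset.mem_univ _, rfl⟩
    rcases lt_or_ge f1 fr with h | h
    · exact h
    · exfalso
      apply hij
      have e1 := S.min'_le _ hiS
      have e2 := S.le_max' _ hiS
      have e3 := S.min'_le _ hjS
      have e4 := S.le_max' _ hjS
      rw [← hfr, ← hf1] at *
      linarith
  have hfrtop : lam * (fr - β) = g := by
    have hD1 := hDzero (fr + g)
    rw [hD] at hD1
    dsimp only at hD1
    have hnot : fr + g ∉ S := by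
      intro hc
      have := S.le_max' _ hc
      rw [← hfr] at this
      linarith
    rw [hA0 _ hnot, mul_zero, zero_add] at hD1
    have hAfr := hApos fr hfrS
    have : fr + g - g = fr := by ring
    rw [this] at hD1
    have hKne := hK.ne'
    have hAne := hAfr.ne'
    have := mul_eq_zero.mp hD1
    rcases this with h | h
    · rcases mul_eq_zero.mp h with h' | h'
      · exact absurd h' hKne
      · linarith [h']
    · exact absurd h hAne
  have hf1bot : lam * (f1 - β) = -g := by
    have hD1 := hDzero f1
    rw [hD] at hD1
    dsimp only at hD1
    have hnot : f1 - g ∉ S := by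
      intro hc
      have := S.min'_le _ hc
      rw [← hf1] at this
      linarith
    rw [hA0 _ hnot, mul_zero, add_zero] at hD1
    have hAf1 := hApos f1 hf1S
    rcases mul_eq_zero.mp hD1 with h | h
    · linarith
    · exact absurd h hAf1.ne'
  have hstep : ∀ ν ∈ S, ν ≠ f1 → ν - g ∈ S := by
    intro ν hν hne1
    by_contra hc
    have hD1 := hDzero ν
    rw [hD] at hD1
    dsimp only at hD1
    rw [hA0 _ hc, mul_zero, add_zero] at hD1
    have hcoef : lam * (ν - β) + g = lam * (ν - f1) := by linarith [hf1bot]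
    rw [hcoef] at hD1
    rcases mul_eq_zero.mp hD1 with h | h
    · have : ν - f1 ≠ 0 := sub_ne_zero.mpr hne1
      have := mul_ne_zero hlam.ne' this
      exact this h
    · exact (hApos ν hν).ne' h
  have hchain : ∀ n : ℕ, (∀ j : ℕ, j < n → fr - j * g ≠ f1) → fr - n * g ∈ S := by
    intro n
    induction n with
    | zero => intro _; simpa using hfrS
    | succ n ih =>
      intro hyp
      have h1 := ih (fun j hj => hyp j (Nat.lt_succ_of_lt hj))
      have h2 := hstep _ h1 (hyp n (Nat.lt_succ_self n))
      have : fr - (n + 1 : ℕ) * g = fr - n * g - g := by push_cast; ring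
      rw [this]
      exact h2
  have hex : ∃ j : ℕ, fr - j * g = f1 := by
    by_contra hc
    push_neg at hc
    have hmaps : ∀ j ∈ Finset.range (m + 2), fr - j * g ∈ S := by
      intro j _
      exact hchain j (fun i _ => hc i)
    have hinj : Set.InjOn (fun j : ℕ => fr - j * g) (Finset.range (m + 2)) := by
      intro a _ b _ hab
      dsimp only at hab
      have h1 : (a : ℝ) * g = (b : ℝ) * g := by linarith
      have h2 : (a : ℝ) = b := mul_right_cancel₀ hg.ne' h1
      exact_mod_cast h2
    have hcard := Finset.card_le_card_of_injOn _ hmaps hinj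
    rw [Finset.card_range] at hcard
    have hSle : S.card ≤ m + 1 := by
      calc S.card ≤ (Finset.univ : Finset (Fin (m+1))).card := Finset.card_image_le
        _ = m + 1 := by simp
    omega
  obtain ⟨j, hj⟩ := hex
  have hjpos : 1 ≤ j := by
    rcases Nat.eq_zero_or_pos j with h | h
    · exfalso; rw [h] at hj; simp at hj; linarith
    · exact h
  have hlamval : lam = 2 / j := by
    have h1 : lam * (fr - f1) = 2 * g := by linarith [hfrtop, hf1bot]
    have h2 : fr - f1 = j * g := by linarith [hj]
    rw [h2] at h1
    have hjne : (j : ℝ) ≠ 0 := Nat.cast_ne_zero.mpr (by omega)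
    field_simp
    nlinarith [h1]
  refine ⟨j, hjpos, ?_, hlamval⟩
  -- j ≤ m
  have hmaps : ∀ i ∈ Finset.range (j + 1), fr - i * g ∈ S := by
    intro i hi
    apply hchain
    intro i' hi'
    intro hcc
    have hij : i' < j := by
      have := Finset.mem_range.mp hi
      omega
    have h3 : (i' : ℝ) * g = (j : ℝ) * g := by linarith [hj, hcc]
    have h4 : (i' : ℝ) = j := mul_right_cancel₀ hg.ne' h3
    have h5 : i' = j := by exact_mod_cast h4
    omega
  have hinj : Set.InjOn (fun i : ℕ => fr - i * g) (Finset.range (j + 1)) := by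
    intro a _ b _ hab
    dsimp only at hab
    have : (a : ℝ) * g = (b : ℝ) * g := by linarith
    have : (a : ℝ) = b := mul_right_cancel₀ hg.ne' this
    exact_mod_cast this
  have hcard := Finset.card_le_card_of_injOn _ hmaps hinj
  rw [Finset.card_range] at hcard
  have hSle : S.card ≤ m + 1 := by
    calc S.card ≤ (Finset.univ : Finset (Fin (m+1))).card := Finset.card_image_le
      _ = m + 1 := by simp
  omega

theorem constant_scalar_curvature_classification (m : ℕ) (hm : 1 ≤ m)
    (F C : Fin (m + 1) → ℝ) (hne : ∃ i j, F i ≠ F j)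
    (ψ : ℝ → ℝ) (hψ : ∀ θ, ψ θ = Real.log (∑ k, Real.exp (C k + θ * F k)))
    (h : ℝ → ℝ) (hh : ∀ θ, h θ = deriv (deriv ψ) θ)
    (lam : ℝ)
    (hS : ∀ θ : ℝ, -(h θ)⁻¹ * deriv (deriv (fun t => Real.log (h t))) θ = lam) :
    ∃ k : ℕ, 1 ≤ k ∧ k ≤ m ∧ lam = 2 / k := by
  classical
  set Z : ℝ → ℝ := fun θ => ∑ k, Real.exp (C k + θ * F k) with hZdef
  set Z1 : ℝ → ℝ := fun θ => ∑ k, F k * Real.exp (C k + θ * F k) with hZ1def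
  set Z2 : ℝ → ℝ := fun θ => ∑ k, F k ^ 2 * Real.exp (C k + θ * F k) with hZ2def
  have hZpos : ∀ θ, 0 < Z θ := fun θ =>
    Finset.sum_pos (fun k _ => Real.exp_pos _) Finset.univ_nonempty
  have hZd : ∀ θ, HasDerivAt Z (Z1 θ) θ := by
    intro θ
    apply HasDerivAt.fun_sum
    intro k _
    have h1 : HasDerivAt (fun θ : ℝ => C k + θ * F k) (F k) θ := by
      simpa using ((hasDerivAt_id θ).mul_const (F k)).const_add (C k)
    simpa [mul_comm] using h1.exp
  have hZ1d : ∀ θ, HasDerivAt Z1 (Z2 θ) θ := by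
    intro θ
    apply HasDerivAt.fun_sum
    intro k _
    have h1 : HasDerivAt (fun θ : ℝ => C k + θ * F k) (F k) θ := by
      simpa using ((hasDerivAt_id θ).mul_const (F k)).const_add (C k)
    have := (h1.exp).const_mul (F k)
    convert! this using 1
    ring
  have hψeq : ψ = fun θ => Real.log (Z θ) := funext hψ
  set v : ℝ → ℝ := fun θ => Z1 θ / Z θ with hvdef
  have hψd : ∀ θ, HasDerivAt ψ (v θ) θ := by
    intro θ
    rw [hψeq]
    simpa [hvdef, div_eq_mul_inv] using (hZd θ).log (hZpos θ).ne'
  have hderivψ : deriv ψ = v := funext fun θ => (hψd θ).deriv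
  set hfun : ℝ → ℝ := fun θ => (Z2 θ * Z θ - Z1 θ ^ 2) / Z θ ^ 2 with hfdef
  have hvd : ∀ θ, HasDerivAt v (hfun θ) θ := by
    intro θ
    have := (hZ1d θ).fun_div (hZd θ) (hZpos θ).ne'
    simpa [hfdef, sq] using this
  have hfunext : h = hfun := by
    funext θ
    rw [hh θ, hderivψ, (hvd θ).deriv]
  have hpos : ∀ θ, 0 < hfun θ := by
    intro θ
    have hN := sum_sq_pos m F C hne θ
    exact div_pos hN (pow_pos (hZpos θ) 2)
  have hZs : ContDiff ℝ (⊤ : ℕ∞) Z :=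
    ContDiff.sum (fun k _ => (contDiff_const.add (contDiff_id.mul contDiff_const)).exp)
  have hZ1s : ContDiff ℝ (⊤ : ℕ∞) Z1 :=
    ContDiff.sum (fun k _ =>
      contDiff_const.mul (contDiff_const.add (contDiff_id.mul contDiff_const)).exp)
  have hZ2s : ContDiff ℝ (⊤ : ℕ∞) Z2 :=
    ContDiff.sum (fun k _ =>
      contDiff_const.mul (contDiff_const.add (contDiff_id.mul contDiff_const)).exp)
  have hfs : ContDiff ℝ (⊤ : ℕ∞) hfun := by
    rw [hfdef]
    exact ((hZ2s.mul hZs).sub (hZ1s.pow 2)).div (hZs.pow 2)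
      (fun θ => pow_ne_zero _ (hZpos θ).ne')
  have hfd : Differentiable ℝ hfun := hfs.differentiable (by simp)
  set h1 : ℝ → ℝ := deriv hfun with h1def
  have h1s : ContDiff ℝ (⊤ : ℕ∞) h1 := (contDiff_infty_iff_deriv.mp hfs).2
  set u1 : ℝ → ℝ := fun θ => h1 θ / hfun θ with u1def
  have hu1s : ContDiff ℝ (⊤ : ℕ∞) u1 := h1s.div hfs (fun θ => (hpos θ).ne')
  have hu1d : Differentiable ℝ u1 := hu1s.differentiable (by simp)
  have hlogd : ∀ θ, HasDerivAt (fun t => Real.log (hfun t)) (u1 θ) θ := fun θ => by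
    simpa [u1def, div_eq_mul_inv] using ((hfd θ).hasDerivAt).log (hpos θ).ne'
  have hlogeq : deriv (fun t => Real.log (h t)) = u1 := by
    rw [hfunext]
    exact funext fun θ => (hlogd θ).deriv
  have hu1' : ∀ θ, deriv u1 θ = -lam * hfun θ := by
    intro θ
    have h0 := hS θ
    rw [hlogeq, hfunext] at h0
    have hne2 := (hpos θ).ne'
    have : deriv u1 θ = -(lam * hfun θ) := by
      field_simp at h0
      linarith
    linarith
  have hh1 : ∀ θ, h1 θ = u1 θ * hfun θ := by
    intro θ
    rw [u1def]
    exact (div_mul_cancel₀ (h1 θ) (hpos θ).ne').symm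
  have hfder : ∀ θ, HasDerivAt hfun (u1 θ * hfun θ) θ := by
    intro θ
    have hda := (hfd θ).hasDerivAt
    rwa [show deriv hfun θ = u1 θ * hfun θ from hh1 θ] at hda
  have hSne' : (Finset.image F Finset.univ).Nonempty :=
    ⟨F 0, Finset.mem_image.mpr ⟨0, Finset.mem_univ _, rfl⟩⟩
  set M2 : ℝ := (Finset.image F Finset.univ).max' hSne' with hM2
  set M1 : ℝ := (Finset.image F Finset.univ).min' hSne' with hM1
  have hbd2 : ∀ θ, v θ ≤ M2 := by
    intro θ
    show Z1 θ / Z θ ≤ M2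
    rw [div_le_iff₀ (hZpos θ)]
    calc Z1 θ = ∑ k, F k * Real.exp (C k + θ * F k) := rfl
      _ ≤ ∑ k, M2 * Real.exp (C k + θ * F k) := by
          apply Finset.sum_le_sum
          intro k _
          have hle : F k ≤ M2 :=
            Finset.le_max' _ _ (Finset.mem_image.mpr ⟨k, Finset.mem_univ _, rfl⟩)
          exact mul_le_mul_of_nonneg_right hle (Real.exp_pos _).le
      _ = M2 * Z θ := by rw [← Finset.mul_sum]
  have hbd1 : ∀ θ, M1 ≤ v θ := by
    intro θ
    show M1 ≤ Z1 θ / Z θ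
    rw [le_div_iff₀ (hZpos θ)]
    calc M1 * Z θ = ∑ k, M1 * Real.exp (C k + θ * F k) := by rw [← Finset.mul_sum]
      _ ≤ ∑ k, F k * Real.exp (C k + θ * F k) := by
          apply Finset.sum_le_sum
          intro k _
          have hle : M1 ≤ F k :=
            Finset.min'_le _ _ (Finset.mem_image.mpr ⟨k, Finset.mem_univ _, rfl⟩)
          exact mul_le_mul_of_nonneg_right hle (Real.exp_pos _).le
      _ = Z1 θ := rfl
  have hlam : 0 < lam := by
    by_contra hc
    exact lam_pos v hfun u1 lam M1 M2 hvd hpos hlogd hu1d hu1' hbd1 hbd2 (not_lt.mp hc)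
  obtain ⟨g, β, K, hg, hK, hmid⟩ := middle v hfun u1 lam hlam hvd hpos hfder hu1d hu1'
  have hZid : ∀ θ, lam * (Z1 θ - β * Z θ) * (K * Real.exp (g * θ) + 1)
      = g * Z θ * (K * Real.exp (g * θ) - 1) := by
    intro θ
    have h0 := hmid θ
    have hv1 : Z1 θ = v θ * Z θ := by
      show Z1 θ = Z1 θ / Z θ * Z θ
      exact (div_mul_cancel₀ (Z1 θ) (hZpos θ).ne').symm
    rw [hv1]
    linear_combination (Z θ) * h0
  have hid : ∀ θ, ∑ k, Real.exp (C k) * ((lam * (F k - β) + g) * Real.exp (F k * θ)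
      + K * (lam * (F k - β) - g) * Real.exp ((F k + g) * θ)) = 0 := by
    intro θ
    have hterm : ∀ k : Fin (m+1), Real.exp (C k) * ((lam * (F k - β) + g) * Real.exp (F k * θ)
        + K * (lam * (F k - β) - g) * Real.exp ((F k + g) * θ))
        = lam * (K * Real.exp (g * θ) + 1) * (F k * Real.exp (C k + θ * F k))
          + (-(lam * β) + g + (-(lam * β) - g) * (K * Real.exp (g * θ)))
            * Real.exp (C k + θ * F k) := by
      intro k
      have e1 : Real.exp (C k + θ * F k) = Real.exp (C k) * Real.exp (F k * θ) := by
        rw [← Real.exp_add]; ring_nf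
      have e2 : Real.exp ((F k + g) * θ) = Real.exp (F k * θ) * Real.exp (g * θ) := by
        rw [← Real.exp_add]; ring_nf
      rw [e1, e2]; ring
    rw [Finset.sum_congr rfl (fun k _ => hterm k)]
    rw [Finset.sum_add_distrib, ← Finset.mul_sum, ← Finset.mul_sum]
    have hZ1v : (∑ k, F k * Real.exp (C k + θ * F k)) = Z1 θ := rfl
    have hZv : (∑ k, Real.exp (C k + θ * F k)) = Z θ := rfl
    rw [hZ1v, hZv]
    linear_combination hZid θ
  exact final_comb m F C hne lam g β K hlam hg hK hid
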